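/- The biconjugate of g satisfies g**(x) = τ|x| for |x| ≤ μ and g**(x) = h(x) + λ for |x| ≥ μ, where τ = sup{v ≥ 0 : h*(v) ≤ λ} and μ = sup{x ≥ 0 : x ∈ ∂h*(τ)} (set to +∞ if ∂h*(τ) = ∅). -/

import Mathlib

noncomputable section

open Set
open scoped Classical

/-- Convex (Fenchel) conjugate of an extended-real-valued function on `ℝ`. -/
def conj (f : ℝ → EReal) (v : ℝ) : EReal := ⨆ x : ℝ, ((v * x : ℝ) : EReal) - f x

/-- Convex subdifferential of an extended-real-valued function on `ℝ`. -/
def subdiff (f : ℝ → EReal) (x : ℝ) : Set ℝ :=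
  {d : ℝ | ∀ y : ℝ, f x + ((d * (y - x) : ℝ) : EReal) ≤ f y}

/-- Convexity of an extended-real-valued function on `ℝ`. -/
def EConvexOn (f : ℝ → EReal) : Prop :=
  ∀ x y a b : ℝ, 0 ≤ a → 0 ≤ b → a + b = 1 →
    f (a * x + b * y) ≤ (a : EReal) * f x + (b : EReal) * f y

/-- The ℓ₀-penalized regularizer `g(x) = λ‖x‖₀ + h(x)`. -/
def gfun (lam : ℝ) (h : ℝ → EReal) (x : ℝ) : EReal :=
  (if x = 0 then (0 : EReal) else (lam : EReal)) + h x

/-- The parameter `τ = sup {v ≥ 0 : h*(v) ≤ λ}` (as a real number). -/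
def tau (lam : ℝ) (h : ℝ → EReal) : ℝ :=
  sSup {v : ℝ | 0 ≤ v ∧ conj h v ≤ (lam : EReal)}

/-- The parameter `μ = sup {x ≥ 0 : x ∈ ∂h*(τ)}` if `∂h*(τ) ≠ ∅`, else `+∞`. -/
def mu (lam : ℝ) (h : ℝ → EReal) : EReal :=
  if (subdiff (conj h) (tau lam h)).Nonempty then
    sSup ((fun x : ℝ => (x : EReal)) '' {x : ℝ | 0 ≤ x ∧ x ∈ subdiff (conj h) (tau lam h)})
  else ⊤

/-- The parameter `β = sup {v ≥ 0 : v ∈ dom h*}`. -/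
def beta (h : ℝ → EReal) : EReal :=
  sSup ((fun v : ℝ => (v : EReal)) '' {v : ℝ | 0 ≤ v ∧ conj h v ≠ ⊤})

/-- The parameter `κ = sup {v ≥ 0 : v ∈ ∂h(μ)}` if `μ < +∞`, else `+∞`. -/
def kappa (lam : ℝ) (h : ℝ → EReal) : EReal :=
  if mu lam h ≠ ⊤ then
    sSup ((fun v : ℝ => (v : EReal)) '' {v : ℝ | 0 ≤ v ∧ v ∈ subdiff h (mu lam h).toReal})
  else ⊤

/-- The set of minimizers of `u ↦ ½(u − v)² + γ·ω(u)`, i.e. `prox_{γω}(v)`. -/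
def proxSet (γ : ℝ) (ω : ℝ → EReal) (v : ℝ) : Set ℝ :=
  {u : ℝ | ∀ w : ℝ,
    ((2⁻¹ * (u - v) ^ 2 : ℝ) : EReal) + (γ : EReal) * ω u ≤
      ((2⁻¹ * (w - v) ^ 2 : ℝ) : EReal) + (γ : EReal) * ω w}

section AuxBiconj
variable {lam : ℝ} {h : ℝ → EReal}

lemma ereal_sub_zero (x : EReal) : x - 0 = x := by
  change x + -0 = x
  rw [neg_zero, add_zero]

lemma le_coe_of_forall_lt {a : EReal} {b : ℝ} (H : ∀ c : ℝ, c < b → (c : EReal) ≤ a) :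
    (b : EReal) ≤ a := by
  by_contra hlt
  push_neg at hlt
  rcases EReal.exists_between_coe_real hlt with ⟨z, hz1, hz2⟩
  exact absurd (H z (EReal.coe_lt_coe_iff.1 hz2)) (not_le.2 hz1)

lemma term_le_conj (f : ℝ → EReal) (v x : ℝ) : ((v * x : ℝ) : EReal) - f x ≤ conj f v :=
  le_iSup (fun x => ((v * x : ℝ) : EReal) - f x) x

lemma hne_bot (hge : ∀ x : ℝ, 0 ≤ h x) (x : ℝ) : h x ≠ ⊥ :=
  fun hb => absurd (hge x) (by rw [hb]; exact not_le.2 EReal.bot_lt_zero)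

lemma h_coe (hge : ∀ x : ℝ, 0 ≤ h x) {x : ℝ} (hx : h x ≠ ⊤) : h x = ((h x).toReal : EReal) :=
  (EReal.coe_toReal hx (hne_bot hge x)).symm

lemma h_coe_nonneg (hge : ∀ x : ℝ, 0 ≤ h x) {x : ℝ} (hx : h x ≠ ⊤) : 0 ≤ (h x).toReal := by
  have := hge x
  rw [h_coe hge hx] at this
  exact_mod_cast this

lemma conj_nonneg (h0 : h 0 = 0) (v : ℝ) : 0 ≤ conj h v := by
  have := term_le_conj h v 0
  rw [mul_zero, h0] at this
  simpa using this

lemma conj_ne_bot (h0 : h 0 = 0) (v : ℝ) : conj h v ≠ ⊥ :=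
  fun hb => absurd (conj_nonneg h0 v) (by rw [hb]; exact not_le.2 EReal.bot_lt_zero)

lemma conj_zero (h0 : h 0 = 0) (hge : ∀ x : ℝ, 0 ≤ h x) : conj h 0 = 0 := by
  refine le_antisymm (iSup_le fun x => ?_) (conj_nonneg h0 0)
  rw [zero_mul]
  have h1 : ((0:ℝ) : EReal) - h x = - h x := by
    rw [EReal.coe_zero]; change (0:EReal) + -h x = -h x; rw [zero_add]
  rw [h1]
  exact EReal.neg_le_neg_iff.2 (hge x) |>.trans_eq (by rw [neg_zero])

lemma conj_even (f : ℝ → EReal) (hf : ∀ x, f (-x) = f x) (v : ℝ) : conj f (-v) = conj f v := by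
  have key : ∀ w : ℝ, conj f (-w) ≤ conj f w := by
    intro w
    refine iSup_le fun x => ?_
    have : ((-w * x : ℝ) : EReal) - f x = ((w * (-x) : ℝ) : EReal) - f (-x) := by
      rw [hf, show w * (-x) = -w * x by ring]
    rw [this]
    exact term_le_conj f w (-x)
  refine le_antisymm (key v) ?_
  have := key (-v)
  rwa [neg_neg] at this

lemma conj_mono (hge : ∀ x : ℝ, 0 ≤ h x) (heven : ∀ x, h (-x) = h x) {t v : ℝ}
    (ht : 0 ≤ t) (htv : t ≤ v) : conj h t ≤ conj h v := by
  refine iSup_le fun x => ?_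
  rcases le_or_gt 0 x with hx | hx
  · exact le_trans (EReal.sub_le_sub (EReal.coe_le_coe_iff.2
      (mul_le_mul_of_nonneg_right htv hx)) le_rfl) (term_le_conj h v x)
  · have h1 : ((t * x : ℝ) : EReal) - h x ≤ ((v * (-x) : ℝ) : EReal) - h (-x) := by
      rw [heven]
      refine EReal.sub_le_sub (EReal.coe_le_coe_iff.2 ?_) le_rfl
      have : t * x ≤ 0 := mul_nonpos_of_nonneg_of_nonpos ht hx.le
      have h2 : 0 ≤ v * (-x) := mul_nonneg (ht.trans htv) (by linarith)
      linarith
    exact h1.trans (term_le_conj h v (-x))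

def ThreePoint (f : ℝ → EReal) : Prop :=
  ∀ ⦃t u w T W : ℝ⦄, t < u → u < w → f t = (T : EReal) → f w = (W : EReal) →
    f u ≤ ((((w-u)/(w-t))*T + ((u-t)/(w-t))*W : ℝ) : EReal)

lemma scalar_mul_le {θ : ℝ} (h0θ : 0 ≤ θ) (hθ1 : θ ≤ 1) {z : EReal} (hz : 0 ≤ z) :
    (θ : EReal) * z ≤ z := by
  rcases eq_or_lt_of_le h0θ with rfl | hpos
  · rw [EReal.coe_zero, EReal.zero_mul]; exact hz
  · induction z with
    | bot => exact absurd hz (not_le.2 EReal.bot_lt_zero)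
    | coe z =>
      rw [← EReal.coe_mul, EReal.coe_le_coe_iff]
      have hz' : 0 ≤ z := by exact_mod_cast hz
      nlinarith
    | top => rw [EReal.coe_mul_top_of_pos hpos]

lemma hmono (h0 : h 0 = 0) (hge : ∀ x : ℝ, 0 ≤ h x) (hconv : EConvexOn h)
    {a b : ℝ} (ha : 0 ≤ a) (hab : a ≤ b) : h a ≤ h b := by
  rcases eq_or_lt_of_le hab with rfl | hlt
  · exact le_rfl
  · have hb : 0 < b := lt_of_le_of_lt ha hlt
    have key := hconv b 0 (a/b) (1 - a/b) (div_nonneg ha hb.le)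
      (by rw [sub_nonneg]; exact (div_le_one hb).2 hab) (by ring)
    rw [mul_zero, add_zero, div_mul_cancel₀ a hb.ne', h0, mul_zero, add_zero] at key
    exact key.trans (scalar_mul_le (div_nonneg ha hb.le) ((div_le_one hb).2 hab) (hge b))

lemma h_threepoint (hconv : EConvexOn h) : ThreePoint h := by
  intro t u w T W h1 h2 hT hW
  have hwt : 0 < w - t := by linarith
  have ha : 0 ≤ (w-u)/(w-t) := div_nonneg (by linarith) hwt.le
  have hb : 0 ≤ (u-t)/(w-t) := div_nonneg (by linarith) hwt.le
  have hab : (w-u)/(w-t) + (u-t)/(w-t) = 1 := by field_simp; ring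
  have hu : (w-u)/(w-t)*t + (u-t)/(w-t)*w = u := by field_simp; ring
  have key := hconv t w _ _ ha hb hab
  rw [hu, hT, hW] at key
  refine key.trans_eq ?_
  rw [← EReal.coe_mul, ← EReal.coe_mul, ← EReal.coe_add]

lemma conj_threepoint : ThreePoint (conj h) := by
  intro t u w T W h1 h2 hT hW
  have hwt : 0 < w - t := by linarith
  have ha : 0 ≤ (w-u)/(w-t) := div_nonneg (by linarith) hwt.le
  have hb : 0 ≤ (u-t)/(w-t) := div_nonneg (by linarith) hwt.le
  refine iSup_le fun x => ?_
  by_cases hfx : h x = ⊤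
  · rw [hfx, EReal.sub_top]; exact bot_le
  · have hb' : h x ≠ ⊥ := by
      intro hbot
      have htop : conj h t = ⊤ := by
        refine top_le_iff.1 (le_trans ?_ (term_le_conj h t x))
        rw [hbot, EReal.coe_sub_bot]
      rw [htop] at hT
      exact EReal.coe_ne_top T hT.symm
    set Hx := (h x).toReal with hHx
    have hcx : h x = (Hx : EReal) := (EReal.coe_toReal hfx hb').symm
    have k1 : t * x - Hx ≤ T := by
      have := term_le_conj h t x
      rw [hcx, hT] at this
      exact_mod_cast this
    have k2 : w * x - Hx ≤ W := by
      have := term_le_conj h w x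
      rw [hcx, hW] at this
      exact_mod_cast this
    rw [hcx]
    rw [show ((u*x:ℝ):EReal) - ((Hx:ℝ):EReal) = ((u*x - Hx : ℝ):EReal) from rfl]
    rw [EReal.coe_le_coe_iff]
    have e : u*x - Hx = ((w-u)/(w-t))*(t*x - Hx) + ((u-t)/(w-t))*(w*x - Hx) := by
      field_simp
      ring
    rw [e]
    exact add_le_add (mul_le_mul_of_nonneg_left k1 ha) (mul_le_mul_of_nonneg_left k2 hb)

/-- slope comparison in product form -/

lemma tp_slope {f : ℝ → EReal} (tp : ThreePoint f) {y t z Y T Z : ℝ}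
    (h1 : y < t) (h2 : t < z) (hY : f y = (Y : EReal)) (hT : f t = (T : EReal))
    (hZ : f z = (Z : EReal)) : (T - Y) * (z - t) ≤ (Z - T) * (t - y) := by
  have key := tp h1 h2 hY hZ
  rw [hT, EReal.coe_le_coe_iff] at key
  have hzy : 0 < z - y := by linarith
  have e : (z-t)/(z-y)*Y + (t-y)/(z-y)*Z - T =
      ((Z - T) * (t - y) - (T - Y) * (z - t)) / (z - y) := by
    field_simp
    ring
  have : 0 ≤ ((Z - T) * (t - y) - (T - Y) * (z - t)) / (z - y) := by
    rw [← e]; linarith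
  have := (div_nonneg_iff.1 this)
  rcases this with ⟨hnum, _⟩ | ⟨_, hden⟩
  · linarith
  · linarith

lemma minorant_block {f : ℝ → EReal} (hfge : ∀ x : ℝ, 0 ≤ f x)
    (hfeven : ∀ x, f (-x) = f x) {t T d : ℝ} (hT : f t = (T : EReal)) (hd0 : 0 ≤ d)
    (left : ∀ y, 0 ≤ y → y < t → f y ≠ ⊤ → T - (f y).toReal ≤ d * (t - y))
    (right : ∀ y, t < y → f y ≠ ⊤ → d * (y - t) ≤ (f y).toReal - T) :
    ∀ y : ℝ, ((T + d * (y - t) : ℝ) : EReal) ≤ f y := by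
  have main : ∀ y, 0 ≤ y → ((T + d * (y - t) : ℝ) : EReal) ≤ f y := by
    intro y hy
    rcases lt_trichotomy y t with hlt | rfl | hgt
    · by_cases hfy : f y = ⊤
      · rw [hfy]; exact le_top
      · rw [h_coe hfge hfy, EReal.coe_le_coe_iff]
        have := left y hy hlt hfy
        linarith
    · rw [hT, EReal.coe_le_coe_iff]
      simp
    · by_cases hfy : f y = ⊤
      · rw [hfy]; exact le_top
      · rw [h_coe hfge hfy, EReal.coe_le_coe_iff]
        have := right y hgt hfy
        linarith
  intro y
  rcases le_or_gt 0 y with hy | hy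
  · exact main y hy
  · have h1 : (T + d * (y - t) : ℝ) ≤ (T + d * (-y - t) : ℝ) := by
      have : d * (y - t) ≤ d * (-y - t) := mul_le_mul_of_nonneg_left (by linarith) hd0
      linarith
    calc ((T + d * (y - t) : ℝ) : EReal) ≤ ((T + d * (-y - t) : ℝ) : EReal) := by
          exact_mod_cast h1
      _ ≤ f (-y) := main (-y) (by linarith)
      _ = f y := hfeven y

lemma minorant_at {f : ℝ → EReal} (hf0 : f 0 = 0) (hfge : ∀ x : ℝ, 0 ≤ f x)
    (hfeven : ∀ x, f (-x) = f x) (tp : ThreePoint f)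
    (hfmono : ∀ a b : ℝ, 0 ≤ a → a ≤ b → f a ≤ f b)
    {t T t' T' : ℝ} (ht : 0 < t) (htt' : t < t') (hT : f t = (T : EReal))
    (hT' : f t' = (T' : EReal)) :
    ∃ d : ℝ, 0 ≤ d ∧ (∀ y : ℝ, ((T + d * (y - t) : ℝ) : EReal) ≤ f y) ∧
      (∀ y, 0 ≤ y → y < t → f y ≠ ⊤ → T - (f y).toReal ≤ d * (t - y)) := by
  set LS := {s : ℝ | ∃ y, 0 ≤ y ∧ y < t ∧ f y ≠ ⊤ ∧ s = (T - (f y).toReal) / (t - y)} with hLS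
  have hne : LS.Nonempty := by
    refine ⟨(T - (f 0).toReal) / (t - 0), 0, le_rfl, ht, ?_, rfl⟩
    rw [hf0]; exact EReal.zero_ne_top
  have hbdd : BddAbove LS := by
    refine ⟨(T' - T) / (t' - t), ?_⟩
    rintro s ⟨y, hy0, hyt, hfy, rfl⟩
    have hY : f y = ((f y).toReal : EReal) := h_coe hfge hfy
    have hs := tp_slope tp hyt htt' hY hT hT'
    rw [div_le_div_iff₀ (by linarith) (by linarith)]
    linarith
  set d := max (sSup LS) 0 with hd
  have dleft : ∀ y, 0 ≤ y → y < t → f y ≠ ⊤ → T - (f y).toReal ≤ d * (t - y) := by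
    intro y hy0 hyt hfy
    have hmem : (T - (f y).toReal) / (t - y) ∈ LS := ⟨y, hy0, hyt, hfy, rfl⟩
    have h1 : (T - (f y).toReal) / (t - y) ≤ d := le_trans (le_csSup hbdd hmem) (le_max_left _ _)
    have := (div_le_iff₀ (by linarith : (0:ℝ) < t - y)).1 h1
    linarith
  have dright : ∀ y, t < y → f y ≠ ⊤ → d * (y - t) ≤ (f y).toReal - T := by
    intro y hyt hfy
    have hY : f y = ((f y).toReal : EReal) := h_coe hfge hfy
    have hd1 : sSup LS ≤ ((f y).toReal - T) / (y - t) := by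
      refine csSup_le hne ?_
      rintro s ⟨y', hy0', hyt', hfy', rfl⟩
      have hY' : f y' = ((f y').toReal : EReal) := h_coe hfge hfy'
      have hs := tp_slope tp hyt' hyt hY' hT hY
      rw [div_le_div_iff₀ (by linarith) (by linarith)]
      linarith
    have hd2 : (0:ℝ) ≤ ((f y).toReal - T) / (y - t) := by
      have hTY : T ≤ (f y).toReal := by
        have := hfmono t y (le_of_lt ht) hyt.le
        rw [hT, h_coe hfge hfy] at this
        exact_mod_cast this
      exact div_nonneg (by linarith) (by linarith)
    have h1 : d ≤ ((f y).toReal - T) / (y - t) := max_le hd1 hd2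
    have := (le_div_iff₀ (by linarith : (0:ℝ) < y - t)).1 h1
    linarith
  exact ⟨d, le_max_right _ _,
    minorant_block hfge hfeven hT (le_max_right _ _) dleft dright, dleft⟩

lemma minorant_at_top {f : ℝ → EReal} (hf0 : f 0 = 0) (hfge : ∀ x : ℝ, 0 ≤ f x)
    (hfeven : ∀ x, f (-x) = f x)
    {t T : ℝ} (ht : 0 < t) (hT : f t = (T : EReal))
    (habove : ∀ y, t < y → f y = ⊤)
    (hbdd : BddAbove {s : ℝ | ∃ y, 0 ≤ y ∧ y < t ∧ f y ≠ ⊤ ∧ s = (T - (f y).toReal) / (t - y)})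
    (K : ℝ) :
    ∃ d : ℝ, K ≤ d ∧ 0 ≤ d ∧ (∀ y : ℝ, ((T + d * (y - t) : ℝ) : EReal) ≤ f y) := by
  set LS := {s : ℝ | ∃ y, 0 ≤ y ∧ y < t ∧ f y ≠ ⊤ ∧ s = (T - (f y).toReal) / (t - y)} with hLS
  have hne : LS.Nonempty := by
    refine ⟨(T - (f 0).toReal) / (t - 0), 0, le_rfl, ht, ?_, rfl⟩
    rw [hf0]; exact EReal.zero_ne_top
  set d := max (max (sSup LS) 0) K with hd
  have dleft : ∀ y, 0 ≤ y → y < t → f y ≠ ⊤ → T - (f y).toReal ≤ d * (t - y) := by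
    intro y hy0 hyt hfy
    have hmem : (T - (f y).toReal) / (t - y) ∈ LS := ⟨y, hy0, hyt, hfy, rfl⟩
    have h1 : (T - (f y).toReal) / (t - y) ≤ d :=
      le_trans (le_csSup hbdd hmem) (le_trans (le_max_left _ _) (le_max_left _ _))
    have := (div_le_iff₀ (by linarith : (0:ℝ) < t - y)).1 h1
    linarith
  have dright : ∀ y, t < y → f y ≠ ⊤ → d * (y - t) ≤ (f y).toReal - T := by
    intro y hyt hfy
    exact absurd (habove y hyt) hfy
  refine ⟨d, le_max_right _ _, le_trans (le_max_right _ _) (le_max_left _ _), ?_⟩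
  exact minorant_block hfge hfeven hT (le_trans (le_max_right _ _) (le_max_left _ _)) dleft dright

lemma S_nonempty (h0 : h 0 = 0) (hge : ∀ x : ℝ, 0 ≤ h x) (hlam : 0 < lam) :
    (0:ℝ) ∈ {v : ℝ | 0 ≤ v ∧ conj h v ≤ (lam : EReal)} :=
  ⟨le_rfl, by rw [conj_zero h0 hge]; exact_mod_cast hlam.le⟩

lemma S_bddAbove (hge : ∀ x : ℝ, 0 ≤ h x) (hdom : ∃ x : ℝ, 0 < x ∧ h x ≠ ⊤) :
    BddAbove {v : ℝ | 0 ≤ v ∧ conj h v ≤ (lam : EReal)} := by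
  obtain ⟨x₀, hx₀, hfin⟩ := hdom
  set H₀ := (h x₀).toReal
  refine ⟨(lam + H₀) / x₀, fun v hv => ?_⟩
  have h1 : ((v * x₀ : ℝ) : EReal) - h x₀ ≤ (lam : EReal) := (term_le_conj h v x₀).trans hv.2
  rw [h_coe hge hfin] at h1
  rw [show ((v * x₀ : ℝ) : EReal) - (H₀ : EReal) = ((v * x₀ - H₀ : ℝ) : EReal) from rfl] at h1
  have h2 : v * x₀ - H₀ ≤ lam := EReal.coe_le_coe_iff.1 h1
  rw [le_div_iff₀ hx₀]
  linarith

lemma tau_nonneg (h0 : h 0 = 0) (hge : ∀ x : ℝ, 0 ≤ h x) (hlam : 0 < lam)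
    (hdom : ∃ x : ℝ, 0 < x ∧ h x ≠ ⊤) : 0 ≤ tau lam h :=
  le_csSup (S_bddAbove hge hdom) (S_nonempty h0 hge hlam)

lemma conj_tau_le (h0 : h 0 = 0) (hge : ∀ x : ℝ, 0 ≤ h x) (hlam : 0 < lam)
    (hdom : ∃ x : ℝ, 0 < x ∧ h x ≠ ⊤) : conj h (tau lam h) ≤ (lam : EReal) := by
  refine iSup_le fun x => ?_
  by_cases hx : h x = ⊤
  · rw [hx, EReal.sub_top]; exact bot_le
  · rw [h_coe hge hx]
    rw [show ((tau lam h * x : ℝ) : EReal) - ((h x).toReal : EReal)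
        = ((tau lam h * x - (h x).toReal : ℝ) : EReal) from rfl]
    rw [EReal.coe_le_coe_iff]
    have hH : 0 ≤ (h x).toReal := h_coe_nonneg hge hx
    rcases le_or_gt x 0 with hx0 | hx0
    · have : tau lam h * x ≤ 0 := mul_nonpos_of_nonneg_of_nonpos (tau_nonneg h0 hge hlam hdom) hx0
      linarith
    · have hub : tau lam h ≤ (lam + (h x).toReal) / x := by
        refine csSup_le ⟨0, S_nonempty h0 hge hlam⟩ fun s hs => ?_
        have h1 : ((s * x : ℝ) : EReal) - h x ≤ (lam : EReal) := (term_le_conj h s x).trans hs.2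
        rw [h_coe hge hx] at h1
        have h2 : s * x - (h x).toReal ≤ lam := EReal.coe_le_coe_iff.1 h1
        rw [le_div_iff₀ hx0]; linarith
      have h3 := (le_div_iff₀ hx0).1 hub
      linarith

lemma conj_gt_of_gt_tau (h0 : h 0 = 0) (hge : ∀ x : ℝ, 0 ≤ h x) (hlam : 0 < lam)
    (hdom : ∃ x : ℝ, 0 < x ∧ h x ≠ ⊤)
    {v : ℝ} (hv : tau lam h < v) : (lam : EReal) < conj h v := by
  by_contra hc
  push_neg at hc
  have h0v : 0 ≤ v := le_trans (tau_nonneg h0 hge hlam hdom) hv.le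
  exact absurd (le_csSup (S_bddAbove hge hdom) ⟨h0v, hc⟩) (not_le.2 hv)

lemma gfun_zero (h0 : h 0 = 0) : gfun lam h 0 = 0 := by
  simp [gfun, h0]

lemma gfun_of_ne {x : ℝ} (hx : x ≠ 0) : gfun lam h x = (lam : EReal) + h x := by
  simp [gfun, hx]

lemma conj_gfun_eq (h0 : h 0 = 0) (hge : ∀ x : ℝ, 0 ≤ h x) (hlam : 0 < lam) (v : ℝ) :
    conj (gfun lam h) v = max 0 (conj h v - (lam : EReal)) := by
  refine le_antisymm (iSup_le fun x => ?_) (max_le ?_ ?_)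
  · by_cases hx : x = 0
    · subst hx
      rw [mul_zero, gfun_zero h0, EReal.coe_zero, ereal_sub_zero]
      exact le_max_left _ _
    · refine le_trans ?_ (le_max_right _ _)
      rw [gfun_of_ne hx]
      by_cases hfx : h x = ⊤
      · rw [hfx, EReal.add_top_of_ne_bot (EReal.coe_ne_bot lam), EReal.sub_top]
        exact bot_le
      · rw [h_coe hge hfx]
        have h1 : ((v * x : ℝ) : EReal) - ((h x).toReal : EReal) ≤ conj h v := by
          rw [← h_coe hge hfx]; exact term_le_conj h v x
        calc ((v*x : ℝ) : EReal) - ((lam : EReal) + ((h x).toReal : EReal))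
            = (((v*x : ℝ) : EReal) - ((h x).toReal : EReal)) - (lam : EReal) := by
              push_cast
              norm_cast
              ring
          _ ≤ conj h v - (lam : EReal) := EReal.sub_le_sub h1 le_rfl
  · have := term_le_conj (gfun lam h) v 0
    rw [mul_zero, gfun_zero h0, EReal.coe_zero, ereal_sub_zero] at this
    exact this
  · rw [EReal.sub_le_iff_le_add (Or.inl (EReal.coe_ne_bot lam)) (Or.inl (EReal.coe_ne_top lam))]
    refine iSup_le fun x => ?_
    by_cases hx : x = 0
    · subst hx
      rw [mul_zero, h0, EReal.coe_zero, ereal_sub_zero]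
      refine add_nonneg ?_ (by exact_mod_cast hlam.le)
      have := term_le_conj (gfun lam h) v 0
      rw [mul_zero, gfun_zero h0, EReal.coe_zero, ereal_sub_zero] at this
      exact this
    · have hterm := term_le_conj (gfun lam h) v x
      rw [gfun_of_ne hx] at hterm
      by_cases hfx : h x = ⊤
      · rw [hfx, EReal.sub_top]; exact bot_le
      · rw [h_coe hge hfx] at hterm ⊢
        have key : ((v*x : ℝ) : EReal) - ((h x).toReal : EReal)
            = (((v*x : ℝ) : EReal) - ((lam : EReal) + ((h x).toReal : EReal))) + (lam : EReal) := by
          push_cast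
          norm_cast
          ring
        rw [key]
        exact add_le_add_left hterm _

lemma affine_minorant (h0 : h 0 = 0) (hge : ∀ x : ℝ, 0 ≤ h x)
    (hlsc : LowerSemicontinuous h) (hconv : EConvexOn h)
    (hdom : ∃ x : ℝ, 0 < x ∧ h x ≠ ⊤) (heven : ∀ x : ℝ, h (-x) = h x)
    {x : ℝ} (hx : 0 < x) (c : ℝ) (hc : (c : EReal) < h x) :
    ∃ v β : ℝ, (∀ y : ℝ, ((v * y - β : ℝ) : EReal) ≤ h y) ∧ c ≤ v * x - β := by
  have tp := h_threepoint hconv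
  have hmon : ∀ a b : ℝ, 0 ≤ a → a ≤ b → h a ≤ h b := fun a b ha hab => hmono h0 hge hconv ha hab
  rcases le_or_gt c 0 with hc0 | hc0
  · refine ⟨0, 0, fun y => ?_, by simpa using hc0⟩
    simpa using hge y
  by_cases hfin : ∀ t, 0 ≤ t → t < x → h t ≠ ⊤
  · -- Case 1: h finite on [0, x)
    obtain ⟨δ, hδ, hball⟩ := Metric.eventually_nhds_iff.1 (hlsc x c hc)
    set t := max (x - δ/2) (x/2) with htdef
    have ht1 : t < x := max_lt (by linarith) (by linarith)
    have ht0 : 0 < t := lt_of_lt_of_le (by linarith) (le_max_right _ _)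
    have hct : (c : EReal) < h t := by
      refine hball ?_
      rw [Real.dist_eq, abs_lt]
      constructor
      · have : x - δ/2 ≤ t := le_max_left _ _
        linarith
      · linarith
    have hft : h t ≠ ⊤ := hfin t ht0.le ht1
    set T := (h t).toReal with hTdef
    have hT : h t = (T : EReal) := h_coe hge hft
    set t' := (t + x)/2 with ht'def
    have hft' : h t' ≠ ⊤ := hfin t' (by positivity) (by simp only [ht'def]; linarith)
    have hT' : h t' = (((h t').toReal : ℝ) : EReal) := h_coe hge hft'
    obtain ⟨d, hd0, hmin, -⟩ := minorant_at h0 hge heven tp hmon ht0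
      (show t < t' by simp only [ht'def]; linarith) hT hT'
    refine ⟨d, d*t - T, fun y => ?_, ?_⟩
    · rw [show d*y - (d*t - T) = T + d*(y - t) by ring]
      exact hmin y
    · have hcT : c < T := by
        rw [hT] at hct
        exact_mod_cast hct
      nlinarith [mul_nonneg hd0 (by linarith : (0:ℝ) ≤ x - t)]
  · -- Case 2
    push_neg at hfin
    obtain ⟨tb, htb0, htbx, htbtop⟩ := hfin
    set D := {s : ℝ | 0 ≤ s ∧ s < x ∧ h s ≠ ⊤} with hD
    have hD0 : (0:ℝ) ∈ D := ⟨le_rfl, hx, by rw [h0]; exact EReal.zero_ne_top⟩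
    have hDle : ∀ s ∈ D, s ≤ tb := by
      intro s hs
      by_contra hlt
      push_neg at hlt
      exact hs.2.2 (top_le_iff.1 (htbtop ▸ hmon tb s htb0 hlt.le))
    have hDbdd : BddAbove D := ⟨tb, hDle⟩
    set r := sSup D with hr
    have hr0 : 0 ≤ r := le_csSup hDbdd hD0
    have hrx : r < x := lt_of_le_of_lt (csSup_le ⟨0, hD0⟩ hDle) htbx
    have hrpos : 0 < r := by
      obtain ⟨x₀, hx₀, hx₀fin⟩ := hdom
      have hx₀tb : x₀ ≤ tb := by
        by_contra hge'
        push_neg at hge'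
        exact hx₀fin (top_le_iff.1 (htbtop ▸ hmon tb x₀ htb0 hge'.le))
      have hx₀tb' : x₀ < tb := lt_of_le_of_ne hx₀tb (by
        intro hEq
        exact hx₀fin (hEq ▸ htbtop))
      have : x₀ ∈ D := ⟨hx₀.le, lt_trans hx₀tb' htbx, hx₀fin⟩
      exact lt_of_lt_of_le hx₀ (le_csSup hDbdd this)
    have hDint : ∀ s, 0 ≤ s → s < r → h s ≠ ⊤ := by
      intro s hs0 hsr
      obtain ⟨s', hs'D, hss'⟩ := exists_lt_of_lt_csSup ⟨0, hD0⟩ hsr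
      intro htop
      exact hs'D.2.2 (top_le_iff.1 (htop ▸ hmon s s' hs0 hss'.le))
    have habove : ∀ y, r < y → h y = ⊤ := by
      intro y hry
      by_cases hyx : y < x
      · by_contra hne
        exact absurd (le_csSup hDbdd ⟨le_trans hr0 hry.le, hyx, hne⟩) (not_le.2 hry)
      · push_neg at hyx
        exact top_le_iff.1 (htbtop ▸ hmon tb y htb0 (by linarith))
    by_cases hbig : ∃ s, 0 < s ∧ s < r ∧ h s ≠ ⊤ ∧ (c : EReal) ≤ h s
    · -- 2a
      obtain ⟨t, ht0, htr, hft, hct⟩ := hbig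
      set T := (h t).toReal with hTdef
      have hT : h t = (T : EReal) := h_coe hge hft
      set t' := (t + r)/2 with ht'def
      have htt' : t < t' := by simp only [ht'def]; linarith
      have ht'r : t' < r := by simp only [ht'def]; linarith
      have hft' : h t' ≠ ⊤ := hDint t' (by positivity) ht'r
      have hT' : h t' = (((h t').toReal : ℝ) : EReal) := h_coe hge hft'
      obtain ⟨d, hd0, hmin, -⟩ := minorant_at h0 hge heven tp hmon ht0 htt' hT hT'
      refine ⟨d, d*t - T, fun y => ?_, ?_⟩
      · rw [show d*y - (d*t - T) = T + d*(y - t) by ring]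
        exact hmin y
      · have hcT : c ≤ T := by
          rw [hT] at hct
          exact_mod_cast hct
        nlinarith [mul_nonneg hd0 (by linarith : (0:ℝ) ≤ x - t)]
    · push_neg at hbig
      by_cases hrtop : h r = ⊤
      · -- 2b-ii : impossible
        exfalso
        obtain ⟨δ, hδ, hball⟩ := Metric.eventually_nhds_iff.1
          (hlsc r c (by show (c : EReal) < h r; rw [hrtop]; exact EReal.coe_lt_top c))
        set s := max (r - δ/2) (r/2) with hsdef
        have hs1 : s < r := max_lt (by linarith) (by linarith)
        have hs0 : 0 < s := lt_of_lt_of_le (by linarith) (le_max_right _ _)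
        have hcs : (c : EReal) < h s := by
          refine hball ?_
          rw [Real.dist_eq, abs_lt]
          constructor
          · have : r - δ/2 ≤ s := le_max_left _ _
            linarith
          · linarith
        exact absurd (hbig s hs0 hs1 (hDint s hs0.le hs1)) (not_lt.2 hcs.le)
      · -- 2b-i
        set T := (h r).toReal with hTdef
        have hT : h r = (T : EReal) := h_coe hge hrtop
        by_cases hbdd : BddAbove {s : ℝ | ∃ y, 0 ≤ y ∧ y < r ∧ h y ≠ ⊤ ∧ s = (T - (h y).toReal) / (r - y)}
        · obtain ⟨d, hKd, hd0, hmin⟩ := minorant_at_top h0 hge heven hrpos hT habove hbdd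
            (max 0 ((c - T)/(x - r)))
          refine ⟨d, d*r - T, fun y => ?_, ?_⟩
          · rw [show d*y - (d*r - T) = T + d*(y - r) by ring]
            exact hmin y
          · have h1 : (c - T)/(x - r) ≤ d := le_trans (le_max_right _ _) hKd
            have h2 := (div_le_iff₀ (by linarith : (0:ℝ) < x - r)).1 h1
            linarith
        · -- unbounded slopes at r
          set K := max 0 (c/(x - r)) with hKdef
          have hK0 : 0 ≤ K := le_max_left _ _
          obtain ⟨s, hsmem, hsK⟩ := not_bddAbove_iff.1 hbdd (K + 1)
          obtain ⟨y, hy0, hyr, hfy, rfl⟩ := hsmem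
          set Hy := (h y).toReal with hHydef
          have hslope0 : (K + 1) * (r - y) < T - Hy := by
            have := (lt_div_iff₀ (by linarith : (0:ℝ) < r - y)).1 hsK
            linarith
          set ε := (r - y)/2 with hεdef
          have hε : 0 < ε := by simp only [hεdef]; linarith
          obtain ⟨δ, hδ, hball⟩ := Metric.eventually_nhds_iff.1
            (hlsc r (((T - ε : ℝ) : EReal)) (by show (((T - ε : ℝ) : EReal)) < h r; rw [hT]; exact_mod_cast (by linarith : T - ε < T)))
          set t := max (r - δ/2) ((y + r)/2) with htdef
          have hty : y < t := lt_of_lt_of_le (by linarith) (le_max_right _ _)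
          have htr : t < r := max_lt (by linarith) (by linarith)
          have ht0 : 0 < t := lt_of_le_of_lt hy0 hty
          have hft : h t ≠ ⊤ := hDint t ht0.le htr
          set Tt := (h t).toReal with hTtdef
          have hTt : h t = (Tt : EReal) := h_coe hge hft
          have hTtval : T - ε < Tt := by
            have hd : (((T - ε : ℝ)) : EReal) < h t := by
              refine hball ?_
              rw [Real.dist_eq, abs_lt]
              constructor
              · have : r - δ/2 ≤ t := le_max_left _ _
                linarith
              · linarith
            rw [hTt] at hd
            exact_mod_cast hd
          have hslope : K * (t - y) ≤ Tt - Hy := by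
            have h1 : Tt - Hy > (K+1)*(r-y) - ε := by linarith
            have h2 : (K+1)*(r-y) - ε = K*(r-y) + (r-y)/2 := by
              simp only [hεdef]; ring
            have h3 : K*(t - y) ≤ K*(r - y) := mul_le_mul_of_nonneg_left (by linarith) hK0
            linarith
          set t' := (t + r)/2 with ht'def
          have htt' : t < t' := by simp only [ht'def]; linarith
          have ht'r : t' < r := by simp only [ht'def]; linarith
          have hft' : h t' ≠ ⊤ := hDint t' (by positivity) ht'r
          have hT' : h t' = (((h t').toReal : ℝ) : EReal) := h_coe hge hft'
          obtain ⟨d, hd0, hmin, hdleft⟩ := minorant_at h0 hge heven tp hmon ht0 htt' hTt hT'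
          have hdK : K ≤ d := by
            have h1 := hdleft y hy0 hty hfy
            have h2 : K * (t - y) ≤ d * (t - y) := le_trans hslope h1
            exact le_of_mul_le_mul_right (by linarith [h2]) (by linarith : (0:ℝ) < t - y)
          refine ⟨d, d*t - Tt, fun y' => ?_, ?_⟩
          · rw [show d*y' - (d*t - Tt) = Tt + d*(y' - t) by ring]
            exact hmin y'
          · have h1 : 0 ≤ Tt := h_coe_nonneg hge hft
            have h2 : c ≤ K*(x - r) := by
              have : c/(x-r) ≤ K := le_max_right _ _
              have := (div_le_iff₀ (by linarith : (0:ℝ) < x - r)).1 this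
              linarith
            have h3 : K*(x - r) ≤ K*(x - t) := mul_le_mul_of_nonneg_left (by linarith) hK0
            have h4 : K*(x - t) ≤ d*(x - t) := mul_le_mul_of_nonneg_right hdK (by linarith)
            nlinarith

lemma conjh_even (heven : ∀ x : ℝ, h (-x) = h x) (v : ℝ) : conj h (-v) = conj h v :=
  conj_even h heven v

lemma conjh_ne_top_of_le_tau (h0 : h 0 = 0) (hge : ∀ x : ℝ, 0 ≤ h x) (hlam : 0 < lam)
    (hdom : ∃ x : ℝ, 0 < x ∧ h x ≠ ⊤) (heven : ∀ x : ℝ, h (-x) = h x)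
    {t : ℝ} (ht : 0 ≤ t) (htau : t ≤ tau lam h) : conj h t ≠ ⊤ := by
  intro htop
  have h1 : (⊤:EReal) ≤ conj h (tau lam h) := htop ▸ conj_mono hge heven ht htau
  have h2 := conj_tau_le h0 hge hlam hdom (lam := lam)
  exact EReal.coe_ne_top lam (top_le_iff.1 (h1.trans h2))

lemma zero_mem_subdiff_zero (h0 : h 0 = 0) (hge : ∀ x : ℝ, 0 ≤ h x) {p : ℝ} (hp : p = 0) :
    (0:ℝ) ∈ subdiff (conj h) p := by
  intro y
  rw [hp, conj_zero h0 hge, zero_mul, EReal.coe_zero, add_zero]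
  exact conj_nonneg h0 y

lemma subd_nonneg (h0 : h 0 = 0) (hge : ∀ x : ℝ, 0 ≤ h x) (hlam : 0 < lam)
    (hdom : ∃ x : ℝ, 0 < x ∧ h x ≠ ⊤) (heven : ∀ x : ℝ, h (-x) = h x)
    (htau : 0 < tau lam h) {d : ℝ} (hd : d ∈ subdiff (conj h) (tau lam h)) :
    0 ≤ d := by
  have key := hd (-(tau lam h))
  rw [show conj h (-(tau lam h)) = conj h (tau lam h) from conjh_even heven _] at key
  set T := (conj h (tau lam h)).toReal with hTdef
  have hne : conj h (tau lam h) ≠ ⊤ := conjh_ne_top_of_le_tau h0 hge hlam hdom heven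
    (tau_nonneg h0 hge hlam hdom) le_rfl
  have hT : conj h (tau lam h) = (T : EReal) := h_coe (fun v => conj_nonneg h0 v) hne
  rw [hT] at key
  have key2 : T + d * (-(tau lam h) - tau lam h) ≤ T := by exact_mod_cast key
  nlinarith

lemma conj_tau_eq (h0 : h 0 = 0) (hge : ∀ x : ℝ, 0 ≤ h x) (hlam : 0 < lam)
    (hdom : ∃ x : ℝ, 0 < x ∧ h x ≠ ⊤) (heven : ∀ x : ℝ, h (-x) = h x)
    {w : ℝ} (hw : tau lam h < w) (hwfin : conj h w ≠ ⊤) :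
    conj h (tau lam h) = (lam : EReal) := by
  set τ := tau lam h with hτdef
  have hτ0 : 0 ≤ τ := tau_nonneg h0 hge hlam hdom
  have hne : conj h τ ≠ ⊤ := conjh_ne_top_of_le_tau h0 hge hlam hdom heven hτ0 le_rfl
  set T := (conj h τ).toReal with hTdef
  have hT : conj h τ = (T : EReal) := h_coe (fun v => conj_nonneg h0 v) hne
  have hTle : T ≤ lam := by
    have := conj_tau_le h0 hge hlam hdom (lam := lam)
    rw [hT] at this
    exact_mod_cast this
  rcases eq_or_lt_of_le hTle with hEq | hTlt
  · rw [hT, hEq]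
  · exfalso
    set W := (conj h w).toReal with hWdef
    have hW : conj h w = (W : EReal) := h_coe (fun v => conj_nonneg h0 v) hwfin
    have hlamW : lam < W := by
      have := conj_gt_of_gt_tau h0 hge hlam hdom hw
      rw [hW] at this
      exact_mod_cast this
    set θ := (W - lam)/(W - T) with hθdef
    have hWT : 0 < W - T := by linarith
    have hθ0 : 0 < θ := div_pos (by linarith) hWT
    have hθ1 : θ < 1 := (div_lt_one hWT).2 (by linarith)
    set u := θ*τ + (1-θ)*w with hudef
    have hτu : τ < u := by nlinarith
    have huw : u < w := by nlinarith
    have h3 := conj_threepoint hτu huw hT hW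
    have he1 : (w-u)/(w-τ) = θ := by
      rw [hudef]
      have hwτ : w - τ ≠ 0 := sub_ne_zero.2 hw.ne'
      field_simp
      ring
    have he2 : (u-τ)/(w-τ) = 1-θ := by
      rw [hudef]
      have hwτ : w - τ ≠ 0 := sub_ne_zero.2 hw.ne'
      field_simp
      ring
    rw [he1, he2] at h3
    have he3 : θ*T + (1-θ)*W = lam := by
      rw [hθdef]
      field_simp
      ring
    rw [he3] at h3
    exact absurd h3 (not_le.2 (conj_gt_of_gt_tau h0 hge hlam hdom hτu))

/-- Case B: if the `mu`-defining set fails to be nonempty-and-bounded, then `conj h` is `⊤`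
    beyond `tau`. -/

lemma conjh_top_of_not_caseA (h0 : h 0 = 0) (hge : ∀ x : ℝ, 0 ≤ h x) (hlam : 0 < lam)
    (hdom : ∃ x : ℝ, 0 < x ∧ h x ≠ ⊤) (heven : ∀ x : ℝ, h (-x) = h x)
    (hcase : ¬((subdiff (conj h) (tau lam h)).Nonempty ∧
      BddAbove {x : ℝ | 0 ≤ x ∧ x ∈ subdiff (conj h) (tau lam h)})) :
    ∀ w : ℝ, tau lam h < w → conj h w = ⊤ := by
  intro w hw
  by_contra hwfin
  apply hcase
  set τ := tau lam h with hτdef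
  have hτ0 : 0 ≤ τ := tau_nonneg h0 hge hlam hdom
  have hne : conj h τ ≠ ⊤ := conjh_ne_top_of_le_tau h0 hge hlam hdom heven hτ0 le_rfl
  set T := (conj h τ).toReal with hTdef
  have hT : conj h τ = (T : EReal) := h_coe (fun v => conj_nonneg h0 v) hne
  set W := (conj h w).toReal with hWdef
  have hW : conj h w = (W : EReal) := h_coe (fun v => conj_nonneg h0 v) hwfin
  have hbdd : BddAbove {x : ℝ | 0 ≤ x ∧ x ∈ subdiff (conj h) τ} := by
    refine ⟨(W - T)/(w - τ), ?_⟩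
    rintro d ⟨hd0, hd⟩
    have key := hd w
    rw [hT, hW] at key
    have key2 : T + d * (w - τ) ≤ W := by exact_mod_cast key
    rw [le_div_iff₀ (by linarith : (0:ℝ) < w - τ)]
    linarith
  refine ⟨?_, hbdd⟩
  rcases eq_or_lt_of_le hτ0 with hτz | hτpos
  · refine ⟨0, ?_⟩
    exact zero_mem_subdiff_zero h0 hge hτz.symm
  · obtain ⟨d, hd0, hmin, -⟩ := minorant_at (conj_zero h0 hge) (fun v => conj_nonneg h0 v)
      (conjh_even heven) conj_threepoint (fun a b ha hab => conj_mono hge heven ha hab)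
      hτpos hw hT hW
    refine ⟨d, fun y => ?_⟩
    rw [hT]
    calc (T : EReal) + ((d * (y - τ) : ℝ) : EReal) = ((T + d * (y - τ) : ℝ) : EReal) := by
          norm_cast
      _ ≤ conj h y := hmin y

lemma caseA_pack (h0 : h 0 = 0) (hge : ∀ x : ℝ, 0 ≤ h x) (hlam : 0 < lam)
    (hdom : ∃ x : ℝ, 0 < x ∧ h x ≠ ⊤) (heven : ∀ x : ℝ, h (-x) = h x)
    (hne : (subdiff (conj h) (tau lam h)).Nonempty)
    (hbdd : BddAbove {x : ℝ | 0 ≤ x ∧ x ∈ subdiff (conj h) (tau lam h)}) :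
    ∃ M : ℝ, 0 < M ∧ M ∈ subdiff (conj h) (tau lam h) ∧
      conj h (tau lam h) = (lam : EReal) ∧ mu lam h = (M : EReal) := by
  set τ := tau lam h with hτdef
  set N := {x : ℝ | 0 ≤ x ∧ x ∈ subdiff (conj h) τ} with hNdef
  have hτ0 : 0 ≤ τ := tau_nonneg h0 hge hlam hdom
  have hnetop : conj h τ ≠ ⊤ := conjh_ne_top_of_le_tau h0 hge hlam hdom heven hτ0 le_rfl
  set T := (conj h τ).toReal with hTdef
  have hT : conj h τ = (T : EReal) := h_coe (fun v => conj_nonneg h0 v) hnetop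
  have hNne : N.Nonempty := by
    rcases eq_or_lt_of_le hτ0 with hτz | hτpos
    · exact ⟨0, le_rfl, zero_mem_subdiff_zero h0 hge hτz.symm⟩
    · obtain ⟨d, hd⟩ := hne
      exact ⟨d, subd_nonneg h0 hge hlam hdom heven hτpos hd, hd⟩
  have hNclosed : IsClosed N := by
    have : N = Ici (0:ℝ) ∩ ⋂ y : ℝ, {d : ℝ | conj h τ + ((d * (y - τ) : ℝ) : EReal) ≤ conj h y} := by
      ext d
      simp only [hNdef, mem_setOf_eq, mem_inter_iff, mem_Ici, mem_iInter, subdiff]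
    rw [this]
    refine isClosed_Ici.inter (isClosed_iInter fun y => ?_)
    have : {d : ℝ | conj h τ + ((d * (y - τ) : ℝ) : EReal) ≤ conj h y} =
        (fun d : ℝ => conj h τ + ((d * (y - τ) : ℝ) : EReal)) ⁻¹' (Iic (conj h y)) := rfl
    rw [this]
    refine IsClosed.preimage ?_ isClosed_Iic
    have : (fun d : ℝ => conj h τ + ((d * (y - τ) : ℝ) : EReal)) =
        (fun d : ℝ => ((T + d * (y - τ) : ℝ) : EReal)) := by
      funext d
      rw [hT]
      norm_cast
    rw [this]
    exact continuous_coe_real_ereal.comp (continuous_const.add (continuous_id.mul continuous_const))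
  set M := sSup N with hMdef
  have hMN : M ∈ N := hNclosed.csSup_mem hNne hbdd
  have hexw : ∃ w : ℝ, τ < w ∧ conj h w ≠ ⊤ := by
    by_contra hall
    push_neg at hall
    have : ∀ b : ℝ, ∃ a ∈ N, b < a := by
      intro b
      refine ⟨max M b + 1, ⟨by have := hMN.1; have := le_max_left M b; linarith, fun y => ?_⟩,
        by have := le_max_right M b; linarith⟩
      rcases le_or_gt y τ with hyτ | hyτ
      · calc conj h τ + ((( max M b + 1) * (y - τ) : ℝ) : EReal)
            ≤ conj h τ + ((M * (y - τ) : ℝ) : EReal) := by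
              refine add_le_add_right (EReal.coe_le_coe_iff.2 ?_) _
              have h1 : y - τ ≤ 0 := by linarith
              have h2 : M ≤ max M b + 1 := by have := le_max_left M b; linarith
              nlinarith
          _ ≤ conj h y := hMN.2 y
      · rw [hall y hyτ]
        exact le_top
    rcases hbdd with ⟨ub, hub⟩
    obtain ⟨a, haN, hua⟩ := this ub
    exact absurd (hub haN) (not_le.2 hua)
  obtain ⟨w, hw, hwfin⟩ := hexw
  have hsttau : conj h τ = (lam : EReal) := conj_tau_eq h0 hge hlam hdom heven hw hwfin
  have hMpos : 0 < M := by
    rcases eq_or_lt_of_le hMN.1 with hMz | hMpos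
    · exfalso
      have key := hMN.2 0
      rw [← hMz, zero_mul, EReal.coe_zero, add_zero, conj_zero h0 hge, hsttau] at key
      have : lam ≤ 0 := by exact_mod_cast key
      linarith
    · exact hMpos
  refine ⟨M, hMpos, hMN.2, hsttau, ?_⟩
  rw [mu, if_pos hne]
  refine le_antisymm (sSup_le ?_) ?_
  · rintro e ⟨a, ha, rfl⟩
    exact EReal.coe_le_coe_iff.2 (le_csSup hbdd ha)
  · exact le_sSup ⟨M, hMN, rfl⟩

lemma caseB_mu (hcase : ¬((subdiff (conj h) (tau lam h)).Nonempty ∧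
      BddAbove {x : ℝ | 0 ≤ x ∧ x ∈ subdiff (conj h) (tau lam h)})) :
    mu lam h = ⊤ := by
  rw [mu]
  by_cases hne : (subdiff (conj h) (tau lam h)).Nonempty
  · rw [if_pos hne]
    have hnb : ¬BddAbove {x : ℝ | 0 ≤ x ∧ x ∈ subdiff (conj h) (tau lam h)} := by
      intro hb
      exact hcase ⟨hne, hb⟩
    rw [EReal.eq_top_iff_forall_lt]
    intro y
    obtain ⟨a, haN, hya⟩ := not_bddAbove_iff.1 hnb y
    exact lt_of_lt_of_le (EReal.coe_lt_coe_iff.2 hya) (le_sSup ⟨a, haN, rfl⟩)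
  · rw [if_neg hne]

lemma ereal_top_sub_coe (c : ℝ) : (⊤ : EReal) - (c : EReal) = ⊤ := by
  rw [sub_eq_add_neg, ← EReal.coe_neg, EReal.top_add_coe]

lemma conjG_nonneg (h0 : h 0 = 0) (hge : ∀ x : ℝ, 0 ≤ h x) (hlam : 0 < lam) (v : ℝ) :
    0 ≤ conj (gfun lam h) v := by
  rw [conj_gfun_eq h0 hge hlam]
  exact le_max_left _ _

lemma conjG_eq_zero (h0 : h 0 = 0) (hge : ∀ x : ℝ, 0 ≤ h x) (hlam : 0 < lam)
    {t : ℝ} (hle : conj h t ≤ (lam : EReal)) : conj (gfun lam h) t = 0 := by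
  rw [conj_gfun_eq h0 hge hlam]
  refine max_eq_left ?_
  calc conj h t - (lam : EReal) ≤ (lam : EReal) - (lam : EReal) := EReal.sub_le_sub hle le_rfl
    _ = ((lam - lam : ℝ) : EReal) := rfl
    _ = 0 := by norm_num

lemma conjG_eq_coe (h0 : h 0 = 0) (hge : ∀ x : ℝ, 0 ≤ h x) (hlam : 0 < lam)
    {v V : ℝ} (hV : conj h v = (V : EReal)) (hVlam : lam ≤ V) :
    conj (gfun lam h) v = ((V - lam : ℝ) : EReal) := by
  rw [conj_gfun_eq h0 hge hlam, hV]
  refine max_eq_right ?_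
  rw [show (V : EReal) - (lam : EReal) = ((V - lam : ℝ) : EReal) from rfl]
  exact_mod_cast sub_nonneg.2 hVlam

lemma conjG_eq_top (h0 : h 0 = 0) (hge : ∀ x : ℝ, 0 ≤ h x) (hlam : 0 < lam)
    {v : ℝ} (hv : conj h v = ⊤) : conj (gfun lam h) v = ⊤ := by
  rw [conj_gfun_eq h0 hge hlam, hv, ereal_top_sub_coe]
  exact max_eq_right le_top

lemma biconj_ge (h0 : h 0 = 0) (hge : ∀ x : ℝ, 0 ≤ h x) (hlam : 0 < lam)
    (hdom : ∃ x : ℝ, 0 < x ∧ h x ≠ ⊤)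
    {x : ℝ} (hx : 0 ≤ x) :
    ((tau lam h * x : ℝ) : EReal) ≤ conj (conj (gfun lam h)) x := by
  have hzero : ((0:ℝ) : EReal) ≤ conj (conj (gfun lam h)) x := by
    have := term_le_conj (conj (gfun lam h)) x 0
    rw [mul_zero, conjG_eq_zero h0 hge hlam (by rw [conj_zero h0 hge]; exact_mod_cast hlam.le),
      ereal_sub_zero] at this
    exact this
  rcases eq_or_lt_of_le hx with hEq | hxpos
  · subst hEq
    rw [mul_zero]
    exact hzero
  · apply le_coe_of_forall_lt
    intro cc hcc
    have h1 : cc / x < tau lam h := (div_lt_iff₀ hxpos).2 (by rw [mul_comm] at hcc ⊢; linarith)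
    obtain ⟨t, htS, hlt⟩ := exists_lt_of_lt_csSup ⟨0, S_nonempty h0 hge hlam⟩ h1
    have h2 : cc < x * t := by
      have := (div_lt_iff₀ hxpos).1 hlt
      rw [mul_comm] at this ⊢
      linarith
    calc (cc : EReal) ≤ ((x * t : ℝ) : EReal) := by exact_mod_cast h2.le
      _ = ((x * t : ℝ) : EReal) - conj (gfun lam h) t := by
          rw [conjG_eq_zero h0 hge hlam htS.2, ereal_sub_zero]
      _ ≤ conj (conj (gfun lam h)) x := term_le_conj (conj (gfun lam h)) x t

lemma biconj_le_g (h0 : h 0 = 0) (hge : ∀ x : ℝ, 0 ≤ h x) (hlam : 0 < lam) (x : ℝ) :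
    conj (conj (gfun lam h)) x ≤ h x + (lam : EReal) := by
  refine iSup_le fun v => ?_
  by_cases hhx : h x = ⊤
  · rw [hhx, EReal.top_add_coe]
    exact le_top
  · set H := (h x).toReal with hHdef
    have hH : h x = (H : EReal) := h_coe hge hhx
    have h1 : ((v*x - H : ℝ) : EReal) ≤ conj h v := by
      have := term_le_conj h v x
      rwa [hH] at this
    have h2 : ((v*x - H - lam : ℝ) : EReal) ≤ conj (gfun lam h) v := by
      rw [conj_gfun_eq h0 hge hlam]
      refine le_trans ?_ (le_max_right _ _)
      calc ((v*x - H - lam : ℝ) : EReal) = ((v*x - H : ℝ) : EReal) - (lam : EReal) := rfl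
        _ ≤ conj h v - (lam : EReal) := EReal.sub_le_sub h1 le_rfl
    calc ((x*v : ℝ) : EReal) - conj (gfun lam h) v
        ≤ ((x*v : ℝ) : EReal) - ((v*x - H - lam : ℝ) : EReal) := EReal.sub_le_sub le_rfl h2
      _ = ((x*v - (v*x - H - lam) : ℝ) : EReal) := rfl
      _ = ((H + lam : ℝ) : EReal) := by rw [show x*v - (v*x - H - lam) = H + lam by ring]
      _ = h x + (lam : EReal) := by rw [hH]; rfl

lemma biconj_le_A (h0 : h 0 = 0) (hge : ∀ x : ℝ, 0 ≤ h x) (hlam : 0 < lam)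
    {M : ℝ} (hM0 : 0 ≤ M) (hMsub : M ∈ subdiff (conj h) (tau lam h))
    (hsttau : conj h (tau lam h) = (lam : EReal))
    {x : ℝ} (hx0 : 0 ≤ x) (hxM : x ≤ M) :
    conj (conj (gfun lam h)) x ≤ ((tau lam h * x : ℝ) : EReal) := by
  set τ := tau lam h with hτdef
  refine iSup_le fun v => ?_
  rcases le_or_gt v τ with hvτ | hvτ
  · calc ((x*v : ℝ) : EReal) - conj (gfun lam h) v
        ≤ ((x*v : ℝ) : EReal) - 0 := EReal.sub_le_sub le_rfl (conjG_nonneg h0 hge hlam v)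
      _ = ((x*v : ℝ) : EReal) := ereal_sub_zero _
      _ ≤ ((τ*x : ℝ) : EReal) := by
          refine EReal.coe_le_coe_iff.2 ?_
          have := mul_le_mul_of_nonneg_left hvτ hx0
          rw [mul_comm τ x]
          linarith
  · by_cases hvt : conj h v = ⊤
    · rw [conjG_eq_top h0 hge hlam hvt, EReal.sub_top]
      exact bot_le
    · set V := (conj h v).toReal with hVdef
      have hV : conj h v = (V : EReal) := h_coe (fun u => conj_nonneg h0 u) hvt
      have hsub : lam + M*(v - τ) ≤ V := by
        have key := hMsub v
        rw [hsttau, hV] at key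
        exact_mod_cast key
      have hVlam : lam ≤ V := by nlinarith [mul_nonneg hM0 (by linarith : (0:ℝ) ≤ v - τ)]
      rw [conjG_eq_coe h0 hge hlam hV hVlam]
      rw [show ((x*v : ℝ) : EReal) - ((V - lam : ℝ) : EReal) = ((x*v - (V - lam) : ℝ) : EReal) from rfl]
      refine EReal.coe_le_coe_iff.2 ?_
      have h2 : (v - τ)*(x - M) ≤ 0 :=
        mul_nonpos_of_nonneg_of_nonpos (by linarith) (by linarith)
      nlinarith

lemma biconj_le_B (h0 : h 0 = 0) (hge : ∀ x : ℝ, 0 ≤ h x) (hlam : 0 < lam)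
    (htop : ∀ w : ℝ, tau lam h < w → conj h w = ⊤)
    {x : ℝ} (hx0 : 0 ≤ x) :
    conj (conj (gfun lam h)) x ≤ ((tau lam h * x : ℝ) : EReal) := by
  set τ := tau lam h with hτdef
  refine iSup_le fun v => ?_
  rcases le_or_gt v τ with hvτ | hvτ
  · calc ((x*v : ℝ) : EReal) - conj (gfun lam h) v
        ≤ ((x*v : ℝ) : EReal) - 0 := EReal.sub_le_sub le_rfl (conjG_nonneg h0 hge hlam v)
      _ = ((x*v : ℝ) : EReal) := ereal_sub_zero _
      _ ≤ ((τ*x : ℝ) : EReal) := by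
          refine EReal.coe_le_coe_iff.2 ?_
          have := mul_le_mul_of_nonneg_left hvτ hx0
          rw [mul_comm τ x]
          linarith
  · rw [conjG_eq_top h0 hge hlam (htop v hvτ), EReal.sub_top]
    exact bot_le

lemma biconj_ge_A (h0 : h 0 = 0) (hge : ∀ x : ℝ, 0 ≤ h x) (hlam : 0 < lam)
    (hlsc : LowerSemicontinuous h) (hconv : EConvexOn h)
    (hdom : ∃ x : ℝ, 0 < x ∧ h x ≠ ⊤) (heven : ∀ x : ℝ, h (-x) = h x)
    {M : ℝ} (hMpos : 0 < M) (hMsub : M ∈ subdiff (conj h) (tau lam h))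
    (hsttau : conj h (tau lam h) = (lam : EReal))
    {x : ℝ} (hxM : M ≤ x) :
    h x + (lam : EReal) ≤ conj (conj (gfun lam h)) x := by
  set τ := tau lam h with hτdef
  have hx0 : 0 < x := lt_of_lt_of_le hMpos hxM
  have key : ∀ c : ℝ, (c : EReal) < h x →
      ((c + lam : ℝ) : EReal) ≤ conj (conj (gfun lam h)) x := by
    intro c hc
    obtain ⟨v, β, hmin, hval⟩ := affine_minorant h0 hge hlsc hconv hdom heven hx0 c hc
    have hstvle : conj h v ≤ (β : EReal) := by
      refine iSup_le fun y => ?_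
      by_cases hy : h y = ⊤
      · rw [hy, EReal.sub_top]; exact bot_le
      · have hmy := hmin y
        rw [h_coe hge hy] at hmy ⊢
        have hreal : v*y - β ≤ (h y).toReal := by exact_mod_cast hmy
        rw [show ((v*y : ℝ) : EReal) - (((h y).toReal : ℝ) : EReal)
            = ((v*y - (h y).toReal : ℝ) : EReal) from rfl]
        exact EReal.coe_le_coe_iff.2 (by linarith)
    have hvfin : conj h v ≠ ⊤ := by
      intro htop'
      rw [htop'] at hstvle
      exact EReal.coe_ne_top β (top_le_iff.1 hstvle)
    set V := (conj h v).toReal with hVdef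
    have hV : conj h v = (V : EReal) := h_coe (fun u => conj_nonneg h0 u) hvfin
    have hVβ : V ≤ β := by
      rw [hV] at hstvle
      exact_mod_cast hstvle
    have hsub : lam + M*(v - τ) ≤ V := by
      have key2 := hMsub v
      rw [hsttau, hV] at key2
      exact_mod_cast key2
    rcases le_or_gt v τ with hvτ | hvτ
    · have h1 : c + lam ≤ τ*x := by
        have h2 : 0 ≤ (τ - v)*(x - M) :=
          mul_nonneg (by linarith) (by linarith)
        nlinarith
      exact le_trans (EReal.coe_le_coe_iff.2 h1) (biconj_ge h0 hge hlam hdom hx0.le)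
    · have hVlam : lam ≤ V := by nlinarith [mul_nonneg hMpos.le (by linarith : (0:ℝ) ≤ v - τ)]
      have hterm := term_le_conj (conj (gfun lam h)) x v
      rw [conjG_eq_coe h0 hge hlam hV hVlam] at hterm
      rw [show ((x*v : ℝ) : EReal) - ((V - lam : ℝ) : EReal)
          = ((x*v - (V - lam) : ℝ) : EReal) from rfl] at hterm
      refine le_trans ?_ hterm
      refine EReal.coe_le_coe_iff.2 ?_
      have : c ≤ v * x - β := hval
      nlinarith
  by_cases hhx : h x = ⊤
  · rw [hhx, EReal.top_add_coe, top_le_iff, EReal.eq_top_iff_forall_lt]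
    intro y
    have h1 := key (y - lam + 1) (by rw [hhx]; exact EReal.coe_lt_top _)
    rw [show y - lam + 1 + lam = y + 1 by ring] at h1
    exact lt_of_lt_of_le (EReal.coe_lt_coe_iff.2 (by linarith)) h1
  · rw [h_coe hge hhx,
      show (((h x).toReal : ℝ) : EReal) + (lam : EReal) = (((h x).toReal + lam : ℝ) : EReal) from rfl]
    apply le_coe_of_forall_lt
    intro cc hcc
    have h1 := key (cc - lam) (by
      rw [h_coe hge hhx]
      exact EReal.coe_lt_coe_iff.2 (by linarith))
    rw [show cc - lam + lam = cc by ring] at h1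
    exact h1

lemma gfun_even (heven : ∀ x : ℝ, h (-x) = h x) (x : ℝ) : gfun lam h (-x) = gfun lam h x := by
  unfold gfun
  rw [heven]
  congr 1
  simp [neg_eq_zero]

lemma biconj_even (heven : ∀ x : ℝ, h (-x) = h x) (x : ℝ) :
    conj (conj (gfun lam h)) (-x) = conj (conj (gfun lam h)) x :=
  conj_even _ (fun v => conj_even _ (gfun_even heven) v) x

theorem biconj_gfun_eq' (hlam : 0 < lam)
    (h0 : h 0 = 0) (hge : ∀ x : ℝ, 0 ≤ h x)
    (hlsc : LowerSemicontinuous h) (hconv : EConvexOn h)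
    (hdom : ∃ x : ℝ, 0 < x ∧ h x ≠ ⊤) (heven : ∀ x : ℝ, h (-x) = h x) :
    ∀ x : ℝ,
      (((|x| : ℝ) : EReal) ≤ mu lam h →
        conj (conj (gfun lam h)) x = ((tau lam h * |x| : ℝ) : EReal)) ∧
      (mu lam h ≤ ((|x| : ℝ) : EReal) →
        conj (conj (gfun lam h)) x = h x + (lam : EReal)) := by
  intro x
  have hxabs : conj (conj (gfun lam h)) x = conj (conj (gfun lam h)) |x| := by
    rcases abs_cases x with ⟨hEq, -⟩ | ⟨hEq, -⟩
    · rw [hEq]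
    · rw [hEq, biconj_even heven]
  have hhabs : h x = h |x| := by
    rcases abs_cases x with ⟨hEq, -⟩ | ⟨hEq, -⟩
    · rw [hEq]
    · rw [hEq, heven]
  have habs0 : (0:ℝ) ≤ |x| := abs_nonneg x
  by_cases hcase : (subdiff (conj h) (tau lam h)).Nonempty ∧
      BddAbove {x : ℝ | 0 ≤ x ∧ x ∈ subdiff (conj h) (tau lam h)}
  · obtain ⟨M, hMpos, hMsub, hsttau, hmu⟩ :=
      caseA_pack h0 hge hlam hdom heven hcase.1 hcase.2
    constructor
    · intro hle
      rw [hmu] at hle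
      have hxM : |x| ≤ M := EReal.coe_le_coe_iff.1 hle
      rw [hxabs]
      exact le_antisymm (biconj_le_A h0 hge hlam hMpos.le hMsub hsttau habs0 hxM)
        (biconj_ge h0 hge hlam hdom habs0)
    · intro hle
      rw [hmu] at hle
      have hMx : M ≤ |x| := EReal.coe_le_coe_iff.1 hle
      rw [hxabs, hhabs]
      exact le_antisymm (biconj_le_g h0 hge hlam |x|)
        (biconj_ge_A h0 hge hlam hlsc hconv hdom heven hMpos hMsub hsttau hMx)
  · have hmu := caseB_mu (lam := lam) (h := h) hcase
    have htop := conjh_top_of_not_caseA h0 hge hlam hdom heven hcase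
    constructor
    · intro _
      rw [hxabs]
      exact le_antisymm (biconj_le_B h0 hge hlam htop habs0)
        (biconj_ge h0 hge hlam hdom habs0)
    · intro hle
      rw [hmu] at hle
      exact absurd (top_le_iff.1 hle) (EReal.coe_ne_top |x|)

end AuxBiconj

theorem biconj_gfun_eq (lam : ℝ) (h : ℝ → EReal) (hlam : 0 < lam)
    (h0 : h 0 = 0) (hge : ∀ x : ℝ, 0 ≤ h x)
    (hlsc : LowerSemicontinuous h) (hconv : EConvexOn h)
    (hdom : ∃ x : ℝ, 0 < x ∧ h x ≠ ⊤) (heven : ∀ x : ℝ, h (-x) = h x) :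
    ∀ x : ℝ,
      (((|x| : ℝ) : EReal) ≤ mu lam h →
        conj (conj (gfun lam h)) x = ((tau lam h * |x| : ℝ) : EReal)) ∧
      (mu lam h ≤ ((|x| : ℝ) : EReal) →
        conj (conj (gfun lam h)) x = h x + (lam : EReal)) :=
  biconj_gfun_eq' hlam h0 hge hlsc hconv hdom heven
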